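/- With the setting of the random batch estimator (disjoint sets $S_i$ covering $X$, batches $\mathcal{B}_j$ with probabilities $p_j$, inclusion probabilities $\pi_i = \sum_{j: i\in\mathcal{B}_j} p_j > 0$), let $\pi_* = \min_i \pi_i$ and define $\rho_\omega(x) = 1 - \sum_{i\in\mathcal{B}_\omega} \mathbf{1}_{S_i}(x)/\pi_i$. Then for every $x \in X$, $\mathbb{E}[|\rho_\omega(x)|^2] \le \frac{1}{\pi_*} - 1$. -/

import Mathlib

open MeasureTheory

/-- Second-moment bound for the random batch deviation
`ρ_ω(x) = 1 - ∑_{i ∈ B_ω} 1_{S_i}(x)/π_i`:  `E[|ρ_ω(x)|²] ≤ 1/π_* - 1`. -/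
theorem rbm_variance_bound
    {M N : ℕ} (hM : 0 < M) (hN : 0 < N)
    (B : Fin N → Finset (Fin M))
    (hBne : ∀ j, (B j).Nonempty)
    (hBcover : ∀ i : Fin M, ∃ j, i ∈ B j)
    (p : Fin N → ℝ) (hp : ∀ j, p j ∈ Set.Ioo (0:ℝ) 1)
    (hpsum : ∑ j, p j = 1)
    (π : Fin M → ℝ)
    (hπ : ∀ i, π i = ∑ j ∈ Finset.univ.filter (fun j => i ∈ B j), p j)
    (hπpos : ∀ i, 0 < π i)
    {X : Type*} [MeasurableSpace X]
    (S : Fin M → Set X) (hSmeas : ∀ i, MeasurableSet (S i))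
    (hSdisj : Pairwise (Function.onFun Disjoint S))
    (hScover : (⋃ i, S i) = Set.univ)
    {Ω : Type*} [MeasurableSpace Ω] (P : Measure Ω) [IsProbabilityMeasure P]
    (ω : Ω → Fin N) (hωmeas : Measurable ω)
    (hωlaw : ∀ j, P {a | ω a = j} = ENNReal.ofReal (p j))
    (x : X) :
    ∫ a, |1 - ∑ i ∈ B (ω a), Set.indicator (S i) (fun _ => (1:ℝ)) x / π i| ^ 2 ∂P
      ≤ 1 / (Finset.univ.inf' (Finset.univ_nonempty_iff.mpr ⟨⟨0, hM⟩⟩) π) - 1 := by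
  -- x lies in a unique S i₀
  obtain ⟨i₀, hxi₀⟩ : ∃ i, x ∈ S i := by
    have : x ∈ ⋃ i, S i := hScover ▸ Set.mem_univ x
    exact Set.mem_iUnion.mp this
  set π₀ := Finset.univ.inf' (Finset.univ_nonempty_iff.mpr ⟨⟨0, hM⟩⟩) π with hπ₀
  have hπ₀pos : 0 < π₀ := by
    rw [hπ₀]
    exact (Finset.lt_inf'_iff _).mpr (fun i _ => hπpos i)
  have hind : ∀ i, Set.indicator (S i) (fun _ => (1:ℝ)) x / π i
      = if i = i₀ then 1 / π i₀ else 0 := by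
    intro i
    by_cases h : i = i₀
    · subst h; simp [Set.indicator_of_mem hxi₀]
    · have : x ∉ S i := fun hx => (hSdisj h).le_bot ⟨hx, hxi₀⟩
      simp [Set.indicator_of_notMem this, h]
  have hsum : ∀ j : Fin N, ∑ i ∈ B j, Set.indicator (S i) (fun _ => (1:ℝ)) x / π i
      = if i₀ ∈ B j then 1 / π i₀ else 0 := by
    intro j
    simp_rw [hind]
    exact Finset.sum_ite_eq' (B j) i₀ (fun _ => 1 / π i₀)
  -- define g
  set g : Fin N → ℝ := fun j => |1 - (if i₀ ∈ B j then 1 / π i₀ else 0)| ^ 2 with hg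
  have hfun : ∀ a, |1 - ∑ i ∈ B (ω a), Set.indicator (S i) (fun _ => (1:ℝ)) x / π i| ^ 2
      = g (ω a) := fun a => by rw [hsum]
  have hint : ∫ a, g (ω a) ∂P = ∑ j, p j * g j := by
    rw [← integral_map hωmeas.aemeasurable ((measurable_of_countable g).aestronglyMeasurable)]
    rw [integral_fintype (Integrable.of_finite (μ := Measure.map ω P) (f := g))]
    refine Finset.sum_congr rfl fun j _ => ?_
    unfold Measure.real
    rw [Measure.map_apply hωmeas (measurableSet_singleton j)]
    have : ω ⁻¹' {j} = {a | ω a = j} := rfl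
    rw [this, hωlaw j, ENNReal.toReal_ofReal (hp j).1.le, smul_eq_mul]
  rw [show (∫ a, |1 - ∑ i ∈ B (ω a), Set.indicator (S i) (fun _ => (1:ℝ)) x / π i| ^ 2 ∂P)
      = ∫ a, g (ω a) ∂P from integral_congr_ae (Filter.Eventually.of_forall hfun), hint]
  -- compute the sum
  have hsplit : ∑ j, p j * g j = π i₀ * (1 - 1/π i₀)^2 + (1 - π i₀) := by
    rw [← Finset.sum_filter_add_sum_filter_not Finset.univ (fun j => i₀ ∈ B j)]
    have h1 : ∑ j ∈ Finset.univ.filter (fun j => i₀ ∈ B j), p j * g j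
        = π i₀ * (1 - 1/π i₀)^2 := by
      have key : ∑ j ∈ Finset.univ.filter (fun j => i₀ ∈ B j), p j * g j
          = (∑ j ∈ Finset.univ.filter (fun j => i₀ ∈ B j), p j) * (1 - 1/π i₀)^2 := by
        rw [Finset.sum_mul]
        refine Finset.sum_congr rfl fun j hj => ?_
        have hj' := (Finset.mem_filter.mp hj).2
        rw [hg]
        simp only [hj', if_true]
        rw [sq_abs]
      rw [key, ← hπ i₀]
    have h2 : ∑ j ∈ Finset.univ.filter (fun j => ¬ i₀ ∈ B j), p j * g j
        = ∑ j ∈ Finset.univ.filter (fun j => ¬ i₀ ∈ B j), p j := by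
      refine Finset.sum_congr rfl fun j hj => ?_
      have hj' := (Finset.mem_filter.mp hj).2
      rw [hg]; simp [hj']
    have h3 : ∑ j ∈ Finset.univ.filter (fun j => ¬ i₀ ∈ B j), p j = 1 - π i₀ := by
      have := Finset.sum_filter_add_sum_filter_not Finset.univ (fun j => i₀ ∈ B j) p
      rw [hpsum] at this
      rw [hπ i₀]; linarith
    rw [h1, h2, h3]
  rw [hsplit]
  have hne : π i₀ ≠ 0 := (hπpos i₀).ne'
  have heq : π i₀ * (1 - 1/π i₀)^2 + (1 - π i₀) = 1/π i₀ - 1 := by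
    field_simp; ring
  rw [heq]
  have hle : π₀ ≤ π i₀ := Finset.inf'_le _ (Finset.mem_univ i₀)
  have := one_div_le_one_div_of_le hπ₀pos hle
  linarith
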